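/- Let k be an algebraically closed field and L a finite-dimensional Lie algebra over k. If for every v ∈ L the adjoint endomorphism ad(v) : L → L, x ↦ ⁅v, x⁆, is a semisimple linear endomorphism, then L is abelian, i.e. ⁅x, y⁆ = 0 for all x, y ∈ L. -/

import Mathlib

open Module End LieAlgebra

lemma aux_exists_ne_zero_eigenvalue {k : Type*} [Field k] [IsAlgClosed k] {V : Type*}
    [AddCommGroup V] [Module k V] [FiniteDimensional k V] {f : Module.End k V}
    (hf : f.IsSemisimple) (hne : f ≠ 0) : ∃ μ : k, μ ≠ 0 ∧ f.HasEigenvalue μ := by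
  by_contra hcon
  push_neg at hcon
  apply hne
  have heig : ∀ μ : k, μ ≠ 0 → f.eigenspace μ = ⊥ := by
    intro μ hμ
    have := hcon μ hμ
    rwa [Module.End.hasEigenvalue_iff, not_not] at this
  have htop : ⨆ μ : k, f.eigenspace μ = ⊤ := by
    rw [← Module.End.iSup_maxGenEigenspace_eq_top f]
    refine le_antisymm (iSup_mono fun μ ↦ ?_) (iSup_mono fun μ ↦ ?_) <;>
      rw [Module.End.maxGenEigenspace,
        hf.isFinitelySemisimple.genEigenspace_eq_eigenspace μ (by norm_num)]
  have hker : (⊤ : Submodule k V) ≤ LinearMap.ker f := by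
    rw [← htop]
    refine iSup_le fun μ ↦ ?_
    rcases eq_or_ne μ 0 with rfl | hμ
    · rw [Module.End.eigenspace_zero]
    · rw [heig μ hμ]; exact bot_le
  ext v
  simpa using hker (Submodule.mem_top : v ∈ ⊤)

/-- A finite-dimensional Lie algebra over an algebraically closed field in which
every adjoint endomorphism `ad v` is semisimple is abelian. -/
theorem stmt_8 {k : Type*} [Field k] [IsAlgClosed k] {L : Type*} [LieRing L]
    [LieAlgebra k L] [FiniteDimensional k L]
    (h : ∀ v : L, (LieAlgebra.ad k L v).IsSemisimple) :
    ∀ x y : L, ⁅x, y⁆ = 0 := by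
  intro x y
  by_contra hxy
  have hfne : LieAlgebra.ad k L x ≠ 0 := by
    intro h0
    apply hxy
    simpa using LinearMap.congr_fun h0 y
  obtain ⟨μ, hμ, hev⟩ := aux_exists_ne_zero_eigenvalue (h x) hfne
  obtain ⟨w, hw⟩ := hev.exists_hasEigenvector
  have hwx : ⁅x, w⁆ = μ • w := hw.apply_eq_smul
  -- consider g = ad w
  set g := LieAlgebra.ad k L w with hg
  have hgx : g x = -(μ • w) := by
    have h1 : g x = ⁅w, x⁆ := rfl
    rw [h1, ← lie_skew, hwx]
  have hgw : g w = 0 := lie_self w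
  have hx2 : (g * g) x = 0 := by
    rw [Module.End.mul_apply, hgx, map_neg, map_smul, hgw, smul_zero, neg_zero]
  have hx1 : x ∈ g.eigenspace 0 := by
    rw [← (h w).isFinitelySemisimple.genEigenspace_eq_eigenspace 0 (k := (2 : ℕ∞)) (by norm_num)]
    rw [← Nat.cast_ofNat, Module.End.mem_genEigenspace_nat]
    simpa [pow_two, hg] using hx2
  rw [Module.End.eigenspace_zero, LinearMap.mem_ker, hgx, neg_eq_zero] at hx1
  rcases smul_eq_zero.mp hx1 with h' | h'
  · exact hμ h'
  · exact hw.right h'
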